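/- Let a_t = (δ/β)(C A^t + D B^t) for t = 0, 1, 2, …, where δ > 0 and β > 0. Then for every integer t ≥ 1, a_{t−1} + ηβ Σ_{i=0}^{t−1} a_i = γ a_t. -/

import Mathlib

/-- With `a_t = (δ/β)(C A^t + D B^t)`, where `A, B` are the two roots of
`γx² − (1+γ+ηβ)x + 1 = 0` and `C = (A−1)/(A−B)`, `D = (1−B)/(A−B)`, one has
`a_{t−1} + ηβ Σ_{i=0}^{t−1} a_i = γ a_t` for every integer `t ≥ 1`. -/
theorem momentum_sequence_identity
    (η β γ δ A B C D : ℝ)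
    (hη : 0 < η) (hβ : 0 < β) (hδ : 0 < δ) (hγ0 : 0 < γ) (hγ1 : γ < 1)
    (hA : A = ((1 + γ + η * β) + Real.sqrt ((1 + γ + η * β) ^ 2 - 4 * γ)) / (2 * γ))
    (hB : B = ((1 + γ + η * β) - Real.sqrt ((1 + γ + η * β) ^ 2 - 4 * γ)) / (2 * γ))
    (hC : C = (A - 1) / (A - B))
    (hD : D = (1 - B) / (A - B))
    (a : ℕ → ℝ) (ha : ∀ t : ℕ, a t = δ / β * (C * A ^ t + D * B ^ t)) :
    ∀ t : ℕ, 1 ≤ t →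
      a (t - 1) + η * β * ∑ i ∈ Finset.range t, a i = γ * a t := by
  set p : ℝ := 1 + γ + η * β with hp
  set s : ℝ := Real.sqrt (p ^ 2 - 4 * γ) with hs
  have hdisc : 0 < p ^ 2 - 4 * γ := by nlinarith [mul_pos hη hβ, sq_nonneg (1 - γ)]
  have hs2 : s ^ 2 = p ^ 2 - 4 * γ := Real.sq_sqrt hdisc.le
  have hspos : 0 < s := Real.sqrt_pos.mpr hdisc
  have hγ : (γ : ℝ) ≠ 0 := hγ0.ne'
  have hABne : A - B ≠ 0 := by
    rw [hA, hB]
    have : ((p + s) / (2 * γ)) - ((p - s) / (2 * γ)) = s / γ := by field_simp; ring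
    rw [this]
    positivity
  have hsum : A + B = p / γ := by rw [hA, hB]; field_simp; ring
  have hCD : C + D = 1 := by rw [hC, hD]; field_simp; ring
  have hCADB : C * A + D * B = A + B - 1 := by
    rw [hC, hD]; field_simp; ring
  have hA2 : γ * A ^ 2 = p * A - 1 := by
    rw [hA]; field_simp; nlinarith [hs2]
  have hB2 : γ * B ^ 2 = p * B - 1 := by
    rw [hB]; field_simp; nlinarith [hs2]
  -- main statement by induction, reindexed
  have key : ∀ n : ℕ, a n + η * β * ∑ i ∈ Finset.range (n + 1), a i = γ * a (n + 1) := by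
    intro n
    induction n with
    | zero =>
        simp only [zero_add, Finset.sum_range_one, ha, pow_zero, pow_one, mul_one]
        have hgsum : γ * (A + B) = p := by rw [hsum]; field_simp
        rw [hCD, hCADB]
        linear_combination (-(δ / β)) * hgsum - (δ / β) * hp
    | succ n ih =>
        have hsum2 : ∑ i ∈ Finset.range (n + 2), a i
            = ∑ i ∈ Finset.range (n + 1), a i + a (n + 1) := Finset.sum_range_succ _ _
        have hrec : p * a (n + 1) - a n = γ * a (n + 2) := by
          simp only [ha]
          have e1 : γ * A ^ (n + 2) = p * A ^ (n + 1) - A ^ n := by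
            have : A ^ (n + 2) = A ^ n * A ^ 2 := by ring
            rw [this]
            calc γ * (A ^ n * A ^ 2) = A ^ n * (γ * A ^ 2) := by ring
              _ = A ^ n * (p * A - 1) := by rw [hA2]
              _ = p * A ^ (n + 1) - A ^ n := by ring
          have e2 : γ * B ^ (n + 2) = p * B ^ (n + 1) - B ^ n := by
            have : B ^ (n + 2) = B ^ n * B ^ 2 := by ring
            rw [this]
            calc γ * (B ^ n * B ^ 2) = B ^ n * (γ * B ^ 2) := by ring
              _ = B ^ n * (p * B - 1) := by rw [hB2]
              _ = p * B ^ (n + 1) - B ^ n := by ring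
          calc p * (δ / β * (C * A ^ (n + 1) + D * B ^ (n + 1)))
                - δ / β * (C * A ^ n + D * B ^ n)
              = δ / β * (C * (p * A ^ (n + 1) - A ^ n) + D * (p * B ^ (n + 1) - B ^ n)) := by
                ring
            _ = δ / β * (C * (γ * A ^ (n + 2)) + D * (γ * B ^ (n + 2))) := by rw [e1, e2]
            _ = γ * (δ / β * (C * A ^ (n + 2) + D * B ^ (n + 2))) := by ring
        rw [hsum2]
        have : η * β * ∑ i ∈ Finset.range (n + 1), a i = γ * a (n + 1) - a n := by
          linarith [ih]
        rw [mul_add, this]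
        linear_combination hrec - a (n + 1) * hp
  intro t ht
  obtain ⟨n, rfl⟩ : ∃ n, t = n + 1 := ⟨t - 1, (Nat.succ_pred_eq_of_pos ht).symm⟩
  simpa using key n
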